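/- Every chain that is neither well-ordered (every nonempty subset has a least element) nor reverse well-ordered (every nonempty subset has a greatest element) is not sub-representable. -/

import Mathlib

def SubRepresentable (α : Type*) [PartialOrder α] : Prop :=
  ∃ g : Set α → Set α,
    (∀ P₁ P₂ : Set α, Nonempty (↥P₁ ↪o ↥P₂) ↔ g P₁ ⊆ g P₂) ∧
    ∀ P₁ : Set α, Nonempty (↥P₁ ↪o ↥(g P₁)) ∧ Nonempty (↥(g P₁) ↪o ↥P₁)

/-- Inclusion of subsets as an order embedding. -/
def inclOrderEmb {α : Type*} [Preorder α] {s t : Set α} (h : s ⊆ t) : ↥s ↪o ↥t :=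
  { toFun := Set.inclusion h
    inj' := Set.inclusion_injective h
    map_rel_iff' := Iff.rfl }

/-- A linear order that is well-founded for `<` and `>` cannot be infinite. -/
lemma no_infinite_biwf {β : Type*} [LinearOrder β] [Infinite β]
    (h1 : WellFounded ((· < ·) : β → β → Prop))
    (h2 : WellFounded ((· > ·) : β → β → Prop)) : False := by
  -- build the sequence of sets obtained by repeatedly removing the greatest element
  let s : ℕ → {s : Set β // s.Infinite} := fun n =>
    Nat.rec ⟨Set.univ, Set.infinite_univ⟩
      (fun _ p =>
        ⟨{x ∈ p.1 | x < h2.min p.1 p.2.nonempty},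
          by
            refine ((p.2.diff (Set.finite_singleton (h2.min p.1 p.2.nonempty))).mono ?_)
            rintro x ⟨hx, hx'⟩
            refine ⟨hx, ?_⟩
            have := h2.not_lt_min p.1 hx
            simp only [Set.mem_singleton_iff] at hx'
            exact lt_of_le_of_ne (not_lt.1 this) hx'⟩) n
  let f : ℕ → β := fun n => h2.min (s n).1 (s n).2.nonempty
  have hdec : ∀ n, f (n + 1) < f n := by
    intro n
    have hmem : f (n + 1) ∈ (s (n + 1)).1 := h2.min_mem _ _
    exact hmem.2
  exact RelEmbedding.not_wellFounded (RelEmbedding.natGT f hdec) h1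

theorem chain_not_subrep (α : Type*) [LinearOrder α]
    (hwo : ¬ ∀ S : Set α, S.Nonempty → ∃ m ∈ S, ∀ s ∈ S, m ≤ s)
    (hwo' : ¬ ∀ S : Set α, S.Nonempty → ∃ m ∈ S, ∀ s ∈ S, s ≤ m) :
    ¬ SubRepresentable α := by
  rintro ⟨g, hiff, hbi⟩
  -- get a strictly decreasing sequence from non-well-foundedness of <
  have hnwf : ¬ WellFounded ((· < ·) : α → α → Prop) := by
    intro h
    exact hwo (fun S hS => by
      obtain ⟨m, hm, hm'⟩ := h.has_min S hS
      exact ⟨m, hm, fun x hx => not_lt.1 (hm' x hx)⟩)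
  have hnwf' : ¬ WellFounded ((· > ·) : α → α → Prop) := by
    intro h
    exact hwo' (fun S hS => by
      obtain ⟨m, hm, hm'⟩ := h.has_min S hS
      exact ⟨m, hm, fun x hx => not_lt.1 (hm' x hx)⟩)
  rw [RelEmbedding.wellFounded_iff_isEmpty, not_isEmpty_iff] at hnwf hnwf'
  obtain ⟨eb⟩ := hnwf
  obtain ⟨ea⟩ := hnwf'
  -- a : ℕ → α strictly monotone, b : ℕ → α strictly antitone
  set a : ℕ → α := fun n => ea n with ha_def
  set b : ℕ → α := fun n => eb n with hb_def
  have ha : StrictMono a := fun m n h => ea.map_rel_iff.2 h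
  have hb : StrictAnti b := fun m n h => eb.map_rel_iff.2 h
  have hb' : StrictMono (fun n : ℕᵒᵈ => b (OrderDual.ofDual n)) :=
    fun m n h => hb h
  -- the sets
  set D : Set α := Set.range a with hD
  set C : Set α := Set.range (fun n : ℕᵒᵈ => b (OrderDual.ofDual n)) with hC
  let isoD : ℕ ≃o ↥D := ha.orderIso a
  let isoC : ℕᵒᵈ ≃o ↥C := hb'.orderIso _
  -- finite chains
  have haF : ∀ n : ℕ, StrictMono (fun k : Fin n => a k.val) :=
    fun n i j h => ha h
  let F : ℕ → Set α := fun n => Set.range (fun k : Fin n => a k.val)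
  let isoF : ∀ n : ℕ, Fin n ≃o ↥(F n) := fun n => (haF n).orderIso _
  -- embeddings of the finite chains
  have embFF : ∀ m n : ℕ, m ≤ n → (↥(F m) ↪o ↥(F n)) := fun m n h =>
    ((isoF m).symm.toOrderEmbedding.trans (Fin.castLEOrderEmb h)).trans
      (isoF n).toOrderEmbedding
  have embFD : ∀ n : ℕ, (↥(F n) ↪o ↥D) := fun n =>
    ((isoF n).symm.toOrderEmbedding.trans (Fin.valOrderEmb n)).trans
      isoD.toOrderEmbedding
  have embFC : ∀ n : ℕ, (↥(F n) ↪o ↥C) := fun n =>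
    (((isoF n).symm.trans Fin.revOrderIso.symm).toOrderEmbedding.trans
      (Fin.valOrderEmb n).dual).trans isoC.toOrderEmbedding
  -- monotonicity of g on finite chains
  have hmono : ∀ m n : ℕ, m ≤ n → g (F m) ⊆ g (F n) := fun m n h =>
    (hiff _ _).1 ⟨embFF m n h⟩
  have hFD : ∀ n : ℕ, g (F n) ⊆ g D := fun n => (hiff _ _).1 ⟨embFD n⟩
  have hFC : ∀ n : ℕ, g (F n) ⊆ g C := fun n => (hiff _ _).1 ⟨embFC n⟩
  -- no embedding of F (n+1) into F n
  have hnot : ∀ n : ℕ, ¬ g (F (n + 1)) ⊆ g (F n) := by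
    intro n h
    obtain ⟨e⟩ := (hiff (F (n + 1)) (F n)).2 h
    have e' : Fin (n + 1) ↪ Fin n :=
      (((isoF (n + 1)).toOrderEmbedding.trans e).trans
        (isoF n).symm.toOrderEmbedding).toEmbedding
    have := Fintype.card_le_of_embedding e'
    simp at this
  -- choose the witnesses
  have hx : ∀ n : ℕ, ∃ x, x ∈ g (F (n + 1)) ∧ x ∉ g (F n) := by
    intro n
    exact Set.not_subset.1 (hnot n)
  choose x hx1 hx2 using hx
  -- x is injective
  have hxinj : Function.Injective x := by
    intro m n hmn
    by_contra hne
    rcases Nat.lt_or_ge m n with h | h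
    · exact hx2 n (hmn ▸ hmono (m + 1) n h (hx1 m))
    · have h' : n < m := lt_of_le_of_ne h (Ne.symm hne)
      exact hx2 m (hmn ▸ hmono (n + 1) m h' (hx1 n))
  -- all x n lie in S := g D ∩ g C
  set S : Set α := g D ∩ g C with hS
  have hxS : ∀ n, x n ∈ S := fun n => ⟨hFD (n + 1) (hx1 n), hFC (n + 1) (hx1 n)⟩
  have : Infinite ↥S := Infinite.of_injective (fun n => (⟨x n, hxS n⟩ : ↥S))
    (fun m n h => hxinj (congrArg Subtype.val h))
  -- S embeds into ℕ and into ℕᵒᵈ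
  let e1 : ↥S ↪o ℕ :=
    ((inclOrderEmb Set.inter_subset_left).trans (hbi D).2.some).trans
      isoD.symm.toOrderEmbedding
  let e2 : ↥S ↪o ℕᵒᵈ :=
    ((inclOrderEmb Set.inter_subset_right).trans (hbi C).2.some).trans
      isoC.symm.toOrderEmbedding
  have h1 : WellFounded ((· < ·) : ↥S → ↥S → Prop) :=
    e1.wellFounded (wellFounded_lt)
  have h2 : WellFounded ((· > ·) : ↥S → ↥S → Prop) := by
    have r2 : ((· > ·) : ↥S → ↥S → Prop) ↪r ((· < ·) : ℕ → ℕ → Prop) :=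
      { toEmbedding := e2.toEmbedding
        map_rel_iff' := fun {c d} => e2.lt_iff_lt }
    exact r2.wellFounded wellFounded_lt
  exact no_infinite_biwf h1 h2
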